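/- Positivity criterion: for an equivariant LR skew tableau L ∈ LR_{λ,μ}^ν, the following are equivalent: (1) c_L > 0; (2) ω(L^u_{<a})_{|a|} > c(a) - r(a) for all barred a ∈ L; (3) the same inequality holds for all barred a with r(a) = 1; (4) ω(L^u_{<a})_{|a|} ≥ c(a) for all barred a; (5) ω(L^u_{<a})_{|a|} ≥ c(a) for all barred a with r(a) = 1. -/
import Mathlib


open scoped Classical
open MvPolynomial

noncomputable section

namespace EqLR

/-- Ambient polynomial ring `ℂ[x_1,…,x_d ; y_i (i ∈ ℤ)]`.
The variables `x_j` are indexed by `Fin d` (so `x_{j+1} = X (Sum.inl j)`), and the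
variables `y_i` are indexed by `ℤ` (only positive indices actually occur). -/
abbrev P (d : ℕ) := MvPolynomial (Fin d ⊕ ℤ) ℂ

/-- The variable `y_i`. -/
def yI (d : ℕ) (i : ℤ) : P d := X (Sum.inr i)

/-- The variable `x_v` for a value `v ∈ {1,…,d}` (junk value `0` otherwise). -/
def xv (d : ℕ) (v : ℕ) : P d :=
  if h : v - 1 < d then X (Sum.inl ⟨v - 1, h⟩) else 0

/-- The component `ξ_v` of a vector `ξ ∈ ℕ^d`, for a (1-based) value `v ∈ {1,…,d}`. -/
def vecAt {d : ℕ} (ξ : Fin d → ℕ) (v : ℕ) : ℕ :=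
  if h : v - 1 < d then ξ ⟨v - 1, h⟩ else 0

/-- `μ ∈ ℕ^d` is a partition:  `μ_1 ≥ μ_2 ≥ … ≥ μ_d`. -/
def IsPartitionVec {d : ℕ} (μ : Fin d → ℕ) : Prop :=
  ∀ i j : Fin d, i ≤ j → μ j ≤ μ i

/-- `|μ| = μ_1 + ⋯ + μ_d`. -/
def wt {d : ℕ} (μ : Fin d → ℕ) : ℕ := ∑ i, μ i

/-- `ρ = (d-1, d-2, …, 0)`. -/
def rho (d : ℕ) : Fin d → ℕ := fun i => d - 1 - (i : ℕ)

/-- Cells `(r, c)` (both 0-based) of the Young/reverse Young diagram whose row `r` has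
length `μ_{r+1}`.  For the reverse diagram, rows are numbered bottom-to-top and columns
right-to-left; for the ordinary Young diagram, top-to-bottom and left-to-right. -/
def cells (d : ℕ) (μ : Fin d → ℕ) : Finset (ℕ × ℕ) :=
  (Finset.range d ×ˢ Finset.range (Finset.univ.sup μ + 1)).filter
    fun rc => ∃ h : rc.1 < d, rc.2 < μ ⟨rc.1, h⟩

/-- In the column reading word of a *reverse* diagram (columns right-to-left, i.e. in
increasing 0-based column index, each column read top-to-bottom, i.e. in decreasing
0-based row index), the cell `b` is read strictly before the cell `a`. -/
def revBefore (a b : ℕ × ℕ) : Prop := b.2 < a.2 ∨ (b.2 = a.2 ∧ a.1 < b.1)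

/-- In the column reading word of an ordinary Young diagram (rightmost column first,
each column read top-to-bottom), the cell `b` is read strictly before the cell `a`. -/
def youngBefore (a b : ℕ × ℕ) : Prop := a.2 < b.2 ∨ (b.2 = a.2 ∧ b.1 < a.1)

/-- A reverse tableau of shape `μ`: entries in `{1,…,d}`, weakly increasing along rows
(left to right) and strictly increasing down columns (top to bottom). -/
structure RevTableau (d : ℕ) (μ : Fin d → ℕ) where
  val : ℕ × ℕ → ℕ
  mem : ∀ a ∈ cells d μ, 1 ≤ val a ∧ val a ≤ d
  zero : ∀ a ∉ cells d μ, val a = 0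
  row : ∀ r c : ℕ, (r, c + 1) ∈ cells d μ → val (r, c + 1) ≤ val (r, c)
  col : ∀ r c : ℕ, (r + 1, c) ∈ cells d μ → val (r + 1, c) < val (r, c)

/-- The factor `x_v - y_{(d+1-v) + c(a) - r(a)}` attached to an entry of value `v` in
the cell `a` of the reverse diagram (`c(a) = a.2 + 1`, `r(a) = a.1 + 1`, 1-based). -/
def factor (d : ℕ) (v : ℕ) (a : ℕ × ℕ) : P d :=
  xv d v - yI d ((d : ℤ) + 1 - (v : ℤ) + (a.2 : ℤ) - (a.1 : ℤ))

/-- The factorial Schur function `s_μ(x|y) = Σ_R (x|y)^R`. -/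
def fSchur (d : ℕ) (μ : Fin d → ℕ) : P d :=
  ∑ᶠ R : RevTableau d μ, ∏ a ∈ cells d μ, factor d (R.val a) a

/-- The ordinary Schur function `s_μ(x) = Σ_R x^R`. -/
def schurX (d : ℕ) (μ : Fin d → ℕ) : P d :=
  ∑ᶠ R : RevTableau d μ, ∏ a ∈ cells d μ, xv d (R.val a)

/-- The subalgebra `ℂ[y]` of polynomials in the `y` variables only. -/
def ySub (d : ℕ) : Subalgebra ℂ (P d) :=
  Algebra.adjoin ℂ (Set.range fun i : ℤ => yI d i)

/-- `p` is symmetric in the `x` variables. -/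
def SymmX {d : ℕ} (p : P d) : Prop :=
  ∀ σ : Equiv.Perm (Fin d), rename (⇑(Equiv.sumCongr σ (Equiv.refl ℤ))) p = p

/-- The falling factorial power `(x_j | y)^k = (x_j - y_1)⋯(x_j - y_k)`. -/
def ffPow (d : ℕ) (j : Fin d) (k : ℕ) : P d :=
  ∏ i ∈ Finset.range k, (X (Sum.inl j) - yI d ((i : ℤ) + 1))

/-- `(x|y)^ξ = (x_1|y)^{ξ_1} ⋯ (x_d|y)^{ξ_d}`. -/
def xyPow (d : ℕ) (ξ : Fin d → ℕ) : P d := ∏ j : Fin d, ffPow d j (ξ j)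

/-- The alternant `a_ξ(x|y) = det[(x_j|y)^{ξ_i}]`. -/
def aDet (d : ℕ) (ξ : Fin d → ℕ) : P d :=
  Matrix.det (Matrix.of fun i j : Fin d => ffPow d j (ξ i))

/-! ### Skew barred tableaux of shape `λ*μ` -/

/-- A skew barred tableau of shape `λ*μ`: the Young diagram `λ` (placed above and to
the right of the reverse diagram `μ`) is filled with values in `{1,…,d}` (field `top`),
the reverse diagram `μ` is filled with values in `{1,…,d}` (field `bot`), some of whose
cells may be barred (field `barred`); values weakly increase along rows left-to-right
and strictly increase down columns, ignoring bars. -/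
structure SkewBarredTableau (d : ℕ) (lam mu : Fin d → ℕ) where
  top : ℕ × ℕ → ℕ
  bot : ℕ × ℕ → ℕ
  barred : ℕ × ℕ → Prop
  top_mem : ∀ a ∈ cells d lam, 1 ≤ top a ∧ top a ≤ d
  top_zero : ∀ a ∉ cells d lam, top a = 0
  bot_mem : ∀ a ∈ cells d mu, 1 ≤ bot a ∧ bot a ≤ d
  bot_zero : ∀ a ∉ cells d mu, bot a = 0
  barred_sub : ∀ a, barred a → a ∈ cells d mu
  top_row : ∀ r c : ℕ, (r, c + 1) ∈ cells d lam → top (r, c) ≤ top (r, c + 1)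
  top_col : ∀ r c : ℕ, (r + 1, c) ∈ cells d lam → top (r, c) < top (r + 1, c)
  bot_row : ∀ r c : ℕ, (r, c + 1) ∈ cells d mu → bot (r, c + 1) ≤ bot (r, c)
  bot_col : ∀ r c : ℕ, (r + 1, c) ∈ cells d mu → bot (r + 1, c) < bot (r, c)

namespace SkewBarredTableau

variable {d : ℕ} {lam mu : Fin d → ℕ}

/-- `ω(L^u_{<a})_k`: the number of `k`'s among the unbarred entries of `L` read strictly
before the `μ`-cell `a` in the unbarred column word (all of `λ` is read before `μ`). -/
def countBefore (L : SkewBarredTableau d lam mu) (a : ℕ × ℕ) (k : ℕ) : ℕ :=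
  ((cells d lam).filter fun b => L.top b = k).card +
  ((cells d mu).filter fun b => ¬ L.barred b ∧ L.bot b = k ∧ revBefore a b).card

/-- `ω(L^u_{≤a})_k`: as `countBefore`, but the entry of `a` itself is also counted when
`a` is unbarred. -/
def countUpTo (L : SkewBarredTableau d lam mu) (a : ℕ × ℕ) (k : ℕ) : ℕ :=
  ((cells d lam).filter fun b => L.top b = k).card +
  ((cells d mu).filter fun b => ¬ L.barred b ∧ L.bot b = k ∧ (revBefore a b ∨ b = a)).card

/-- Prefix content within the `λ`-part of the word. -/
def topCountUpTo (L : SkewBarredTableau d lam mu) (a : ℕ × ℕ) (k : ℕ) : ℕ :=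
  ((cells d lam).filter fun b => L.top b = k ∧ (youngBefore a b ∨ b = a)).card

/-- `ω(L^u)_k`: total content of the unbarred column word of `L`. -/
def content (L : SkewBarredTableau d lam mu) (k : ℕ) : ℕ :=
  ((cells d lam).filter fun b => L.top b = k).card +
  ((cells d mu).filter fun b => ¬ L.barred b ∧ L.bot b = k).card

/-- The unbarred column word of `L` is Yamanouchi: every prefix contains at least as
many `k`'s as `(k+1)`'s, for every `k ≥ 1`. -/
def Yamanouchi (L : SkewBarredTableau d lam mu) : Prop :=
  (∀ a ∈ cells d lam, ∀ k : ℕ, 1 ≤ k → L.topCountUpTo a (k + 1) ≤ L.topCountUpTo a k) ∧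
  (∀ a ∈ cells d mu, ¬ L.barred a → ∀ k : ℕ, 1 ≤ k →
      L.countUpTo a (k + 1) ≤ L.countUpTo a k)

/-- `L` is an equivariant Littlewood–Richardson skew tableau of shape `λ*μ` and unbarred
content `ν`. -/
def IsLR (L : SkewBarredTableau d lam mu) (ν : Fin d → ℕ) : Prop :=
  L.Yamanouchi ∧ ∀ i : Fin d, L.content ((i : ℕ) + 1) = ν i

/-- The index `|a|' + ω(L^u_{<a})_{|a|}` of the first `y` in the factor of `c_L` at a
barred cell `a`. -/
def eIdx (L : SkewBarredTableau d lam mu) (a : ℕ × ℕ) : ℤ :=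
  ((d : ℤ) + 1 - (L.bot a : ℤ)) + (L.countBefore a (L.bot a) : ℤ)

/-- The index `|a|' + c(a) - r(a)` of the second `y` in the factor of `c_L` at a barred
cell `a`. -/
def fIdx (L : SkewBarredTableau d lam mu) (a : ℕ × ℕ) : ℤ :=
  ((d : ℤ) + 1 - (L.bot a : ℤ)) + (a.2 : ℤ) - (a.1 : ℤ)

/-- The weight `c_L = ∏_{a barred} (y_{|a|'+ω(L^u_{<a})_{|a|}} - y_{|a|'+c(a)-r(a)})`. -/
def cWt (L : SkewBarredTableau d lam mu) : P d :=
  ∏ a ∈ (cells d mu).filter (fun a => L.barred a), (yI d (L.eIdx a) - yI d (L.fIdx a))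

/-- `Δ(a) = ω(L^u_{≤a})_{|a|} - c(a) + r(a)`. -/
def Δ (L : SkewBarredTableau d lam mu) (a : ℕ × ℕ) : ℤ :=
  (L.countUpTo a (L.bot a) : ℤ) - ((a.2 : ℤ) + 1) + ((a.1 : ℤ) + 1)

end SkewBarredTableau

/-! ### Reverse barred tableaux -/

/-- A reverse barred tableau of shape `μ`. -/
structure RevBarredTableau (d : ℕ) (μ : Fin d → ℕ) where
  val : ℕ × ℕ → ℕ
  barred : ℕ × ℕ → Prop
  mem : ∀ a ∈ cells d μ, 1 ≤ val a ∧ val a ≤ d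
  zero : ∀ a ∉ cells d μ, val a = 0
  barred_sub : ∀ a, barred a → a ∈ cells d μ
  row : ∀ r c : ℕ, (r, c + 1) ∈ cells d μ → val (r, c + 1) ≤ val (r, c)
  col : ∀ r c : ℕ, (r + 1, c) ∈ cells d μ → val (r + 1, c) < val (r, c)

namespace RevBarredTableau

variable {d : ℕ} {μ : Fin d → ℕ}

/-- `ω(B^u_{<a})_k`. -/
def countBefore (B : RevBarredTableau d μ) (a : ℕ × ℕ) (k : ℕ) : ℕ :=
  ((cells d μ).filter fun b => ¬ B.barred b ∧ B.val b = k ∧ revBefore a b).card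

/-- `ω(B^u_{≤a})_k` (including `a` itself when unbarred). -/
def countUpTo (B : RevBarredTableau d μ) (a : ℕ × ℕ) (k : ℕ) : ℕ :=
  ((cells d μ).filter fun b => ¬ B.barred b ∧ B.val b = k ∧ (revBefore a b ∨ b = a)).card

/-- `ω(B^u)_k`. -/
def content (B : RevBarredTableau d μ) (k : ℕ) : ℕ :=
  ((cells d μ).filter fun b => ¬ B.barred b ∧ B.val b = k).card

/-- `e_{ξ,B}(a) = (ξ + ω(B^u_{<a}))_{|a|}`. -/
def eIdx (B : RevBarredTableau d μ) (ξ : Fin d → ℕ) (a : ℕ × ℕ) : ℤ :=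
  (vecAt ξ (B.val a) : ℤ) + (B.countBefore a (B.val a) : ℤ)

/-- `f_B(a) = |a|' + c(a) - r(a)`. -/
def fIdx (B : RevBarredTableau d μ) (a : ℕ × ℕ) : ℤ :=
  ((d : ℤ) + 1 - (B.val a : ℤ)) + (a.2 : ℤ) - (a.1 : ℤ)

/-- `c_{ξ,B} = ∏_{a barred} (y_{e_{ξ,B}(a)} - y_{f_B(a)})`. -/
def cXi (B : RevBarredTableau d μ) (ξ : Fin d → ℕ) : P d :=
  ∏ a ∈ (cells d μ).filter (fun a => B.barred a), (yI d (B.eIdx ξ a) - yI d (B.fIdx a))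

/-- The unbarred column word of `λ*B` is Yamanouchi (the `λ`-part is the canonical
filling of `λ`, whose whole content `λ` is added to every prefix of `B^u`). -/
def StarYam (B : RevBarredTableau d μ) (lam : Fin d → ℕ) : Prop :=
  ∀ a ∈ cells d μ, ¬ B.barred a → ∀ k : ℕ, 1 ≤ k →
    vecAt lam (k + 1) + B.countUpTo a (k + 1) ≤ vecAt lam k + B.countUpTo a k

end RevBarredTableau

/-! ### Reverse hatted tableaux -/

/-- A hat decoration: none, left hat, or right hat. -/
inductive Hat where
  | unhatted : Hat
  | left : Hat
  | right : Hat
deriving DecidableEq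

/-- A reverse hatted tableau of shape `μ`. -/
structure RevHattedTableau (d : ℕ) (μ : Fin d → ℕ) where
  val : ℕ × ℕ → ℕ
  hat : ℕ × ℕ → Hat
  mem : ∀ a ∈ cells d μ, 1 ≤ val a ∧ val a ≤ d
  zero : ∀ a ∉ cells d μ, val a = 0
  hat_out : ∀ a ∉ cells d μ, hat a = Hat.unhatted
  row : ∀ r c : ℕ, (r, c + 1) ∈ cells d μ → val (r, c + 1) ≤ val (r, c)
  col : ∀ r c : ℕ, (r + 1, c) ∈ cells d μ → val (r + 1, c) < val (r, c)

namespace RevHattedTableau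

variable {d : ℕ} {μ : Fin d → ℕ}

/-- `ω(H^u_{<a})_k`: content of the unhatted column word of `H` read before `a`. -/
def countBefore (H : RevHattedTableau d μ) (a : ℕ × ℕ) (k : ℕ) : ℕ :=
  ((cells d μ).filter fun b => H.hat b = Hat.unhatted ∧ H.val b = k ∧ revBefore a b).card

/-- `ω(H^u)_k`. -/
def content (H : RevHattedTableau d μ) (k : ℕ) : ℕ :=
  ((cells d μ).filter fun b => H.hat b = Hat.unhatted ∧ H.val b = k).card

/-- `e_{ξ,H}(a) = (ξ + ω(H^u_{<a}))_{|a|}`. -/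
def eIdx (H : RevHattedTableau d μ) (ξ : Fin d → ℕ) (a : ℕ × ℕ) : ℤ :=
  (vecAt ξ (H.val a) : ℤ) + (H.countBefore a (H.val a) : ℤ)

/-- `f_H(a) = |a|' + c(a) - r(a)`. -/
def fIdx (H : RevHattedTableau d μ) (a : ℕ × ℕ) : ℤ :=
  ((d : ℤ) + 1 - (H.val a : ℤ)) + (a.2 : ℤ) - (a.1 : ℤ)

/-- `d_{ξ,H} = ∏_{a ∈ H^l} y_{e_{ξ,H}(a)} · ∏_{a ∈ H^r} (-y_{f_H(a)})`. -/
def dWt (H : RevHattedTableau d μ) (ξ : Fin d → ℕ) : P d :=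
  (∏ a ∈ (cells d μ).filter (fun a => H.hat a = Hat.left), yI d (H.eIdx ξ a)) *
  ∏ a ∈ (cells d μ).filter (fun a => H.hat a = Hat.right), (-(yI d (H.fIdx a)))

end RevHattedTableau

/-- `H̄ = B`: `H` unbars to the reverse barred tableau `B`. -/
def UnbarsTo {d : ℕ} {μ : Fin d → ℕ} (H : RevHattedTableau d μ)
    (B : RevBarredTableau d μ) : Prop :=
  H.val = B.val ∧ ∀ a, (H.hat a ≠ Hat.unhatted ↔ B.barred a)

/-- The simple transposition `σ_i` on values: exchanges `i` and `i+1`. -/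
def swapVal (i v : ℕ) : ℕ := if v = i then i + 1 else if v = i + 1 then i else v

/-- The action of `σ_i` on `ℕ^d` by permuting coordinates. -/
def swapVec {d : ℕ} (i : ℕ) (ξ : Fin d → ℕ) : Fin d → ℕ :=
  fun j => vecAt ξ (swapVal i ((j : ℕ) + 1))

/-! ### Reverse (barred) subtableaux -/

/-- A reverse subtableau of shape `μ`: each cell is empty (value `0`) or carries a value
in `{1,…,d}`; no row or column conditions. -/
structure RevSubTableau (d : ℕ) (μ : Fin d → ℕ) where
  val : ℕ × ℕ → ℕ
  mem : ∀ a ∈ cells d μ, val a ≤ d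
  zero : ∀ a ∉ cells d μ, val a = 0

/-- A reverse barred subtableau of shape `μ`: a reverse subtableau some of whose filled
cells are barred. -/
structure RevBarredSubTableau (d : ℕ) (μ : Fin d → ℕ) where
  val : ℕ × ℕ → ℕ
  barred : ℕ × ℕ → Prop
  mem : ∀ a ∈ cells d μ, val a ≤ d
  zero : ∀ a ∉ cells d μ, val a = 0
  barred_filled : ∀ a, barred a → a ∈ cells d μ ∧ val a ≠ 0

/-- `(x|y)^R` for a reverse subtableau `R`. -/
def RevSubTableau.xyProd {d : ℕ} {μ : Fin d → ℕ} (R : RevSubTableau d μ) : P d :=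
  ∏ a ∈ (cells d μ).filter (fun a => R.val a ≠ 0), factor d (R.val a) a

namespace RevBarredSubTableau

variable {d : ℕ} {μ : Fin d → ℕ}

/-- `ω(B^u_{<a})_k`: unbarred filled entries of value `k` read before `a`. -/
def countBefore (B : RevBarredSubTableau d μ) (a : ℕ × ℕ) (k : ℕ) : ℕ :=
  ((cells d μ).filter fun b => ¬ B.barred b ∧ B.val b = k ∧ revBefore a b).card

/-- `ω(B^u)_k`. -/
def content (B : RevBarredSubTableau d μ) (k : ℕ) : ℕ :=
  ((cells d μ).filter fun b => ¬ B.barred b ∧ B.val b = k).card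

/-- `e_{ξ,B}(a) = (ξ + ω(B^u_{<a}))_{|a|}`. -/
def eIdx (B : RevBarredSubTableau d μ) (ξ : Fin d → ℕ) (a : ℕ × ℕ) : ℤ :=
  (vecAt ξ (B.val a) : ℤ) + (B.countBefore a (B.val a) : ℤ)

/-- `f_B(a) = |a|' + c(a) - r(a)`. -/
def fIdx (B : RevBarredSubTableau d μ) (a : ℕ × ℕ) : ℤ :=
  ((d : ℤ) + 1 - (B.val a : ℤ)) + (a.2 : ℤ) - (a.1 : ℤ)

/-- `c_{ξ,B}`. -/
def cXi (B : RevBarredSubTableau d μ) (ξ : Fin d → ℕ) : P d :=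
  ∏ a ∈ (cells d μ).filter (fun a => B.barred a), (yI d (B.eIdx ξ a) - yI d (B.fIdx a))

end RevBarredSubTableau

end EqLR

namespace EqLR

section Aux

variable {d : ℕ} {lam mu : Fin d → ℕ}

lemma mem_cells {ξ : Fin d → ℕ} {a : ℕ × ℕ} :
    a ∈ cells d ξ ↔ ∃ h : a.1 < d, a.2 < ξ ⟨a.1, h⟩ := by
  unfold cells
  simp only [Finset.mem_filter, Finset.mem_product, Finset.mem_range]
  constructor
  · rintro ⟨-, h⟩; exact h
  · rintro ⟨h1, h2⟩
    refine ⟨⟨h1, ?_⟩, h1, h2⟩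
    exact lt_of_lt_of_le h2 (Nat.le_succ_of_le (Finset.le_sup (Finset.mem_univ _)))

lemma cells_mono_col {ξ : Fin d → ℕ} {r c c' : ℕ} (h : (r, c) ∈ cells d ξ)
    (hc : c' ≤ c) : (r, c') ∈ cells d ξ := by
  rcases mem_cells.mp h with ⟨h1, h2⟩
  exact mem_cells.mpr ⟨h1, lt_of_le_of_lt hc h2⟩

lemma cells_mono_row {ξ : Fin d → ℕ} (hξ : IsPartitionVec ξ) {r r' c : ℕ}
    (h : (r, c) ∈ cells d ξ) (hr : r' ≤ r) : (r', c) ∈ cells d ξ := by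
  rcases mem_cells.mp h with ⟨h1, h2⟩
  have h1' : r' < d := lt_of_le_of_lt hr h1
  exact mem_cells.mpr ⟨h1', lt_of_lt_of_le h2 (hξ ⟨r', h1'⟩ ⟨r, h1⟩ hr)⟩

end Aux

namespace SkewBarredTableau

variable {d : ℕ} {lam mu : Fin d → ℕ} (L : SkewBarredTableau d lam mu)

/-- Strict decrease of column entries going up. -/
lemma bot_strict (hmu : IsPartitionVec mu) {c i j : ℕ}
    (hj : (j, c) ∈ cells d mu) (hij : i < j) : L.bot (j, c) < L.bot (i, c) := by
  induction j with
  | zero => omega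
  | succ n ih =>
    have h1 : (n, c) ∈ cells d mu := cells_mono_row hmu hj (Nat.le_succ n)
    have h2 := L.bot_col n c hj
    rcases Nat.lt_or_ge i n with hlt | hge
    · exact lt_trans h2 (ih h1 hlt)
    · have : i = n := by omega
      subst this; exact h2

/-- The prefix count: `λ`-content plus unbarred entries of value `k` in
columns strictly to the right of column `c` (i.e. with index `< c`). -/
def Ncnt (c k : ℕ) : ℕ :=
  ((cells d lam).filter fun b => L.top b = k).card +
    ((cells d mu).filter fun b => ¬ L.barred b ∧ L.bot b = k ∧ b.2 < c).card

lemma Ncnt_zero (k : ℕ) :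
    L.Ncnt 0 k = ((cells d lam).filter fun b => L.top b = k).card := by
  unfold Ncnt
  have : ((cells d mu).filter fun b => ¬ L.barred b ∧ L.bot b = k ∧ b.2 < 0) = ∅ :=
    Finset.filter_eq_empty_iff.mpr (fun b _ h => Nat.not_lt_zero _ h.2.2)
  rw [this]; simp

lemma Ncnt_succ (c k : ℕ) :
    L.Ncnt (c + 1) k = L.Ncnt c k +
      ((cells d mu).filter fun b => ¬ L.barred b ∧ L.bot b = k ∧ b.2 = c).card := by
  unfold Ncnt
  rw [Nat.add_assoc]
  congr 1
  have hcong : ((cells d mu).filter fun b => ¬ L.barred b ∧ L.bot b = k ∧ b.2 < c + 1) =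
      (cells d mu).filter fun b =>
        (¬ L.barred b ∧ L.bot b = k ∧ b.2 < c) ∨ (¬ L.barred b ∧ L.bot b = k ∧ b.2 = c) := by
    apply Finset.filter_congr
    intro b _
    constructor
    · rintro ⟨h1, h2, h3⟩
      rcases Nat.lt_or_ge b.2 c with h | h
      · exact Or.inl ⟨h1, h2, h⟩
      · exact Or.inr ⟨h1, h2, by omega⟩
    · rintro (⟨h1, h2, h3⟩ | ⟨h1, h2, h3⟩) <;> exact ⟨h1, h2, by omega⟩
  rw [hcong, Finset.filter_or, Finset.card_union_of_disjoint]
  rw [Finset.disjoint_left]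
  intro b hb hb'
  have h1 := (Finset.mem_filter.mp hb).2.2.2
  have h2 := (Finset.mem_filter.mp hb').2.2.2
  omega

/-- `ω(L^u_{<a})_{|a|}` only sees full columns to the right. -/
lemma countBefore_eq_Ncnt (hmu : IsPartitionVec mu) {a : ℕ × ℕ}
    (ha : a ∈ cells d mu) : L.countBefore a (L.bot a) = L.Ncnt a.2 (L.bot a) := by
  unfold SkewBarredTableau.countBefore Ncnt
  congr 1
  refine congrArg Finset.card (Finset.filter_congr ?_)
  intro b hb
  constructor
  · rintro ⟨h1, h2, h3 | ⟨h3, h4⟩⟩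
    · exact ⟨h1, h2, h3⟩
    · exfalso
      have hbeq : b = (b.1, a.2) := by rw [← h3]
      have haeq : a = (a.1, a.2) := rfl
      have hbc : (b.1, a.2) ∈ cells d mu := hbeq ▸ hb
      have := L.bot_strict hmu hbc h4
      rw [← hbeq, ← haeq] at this
      omega
  · rintro ⟨h1, h2, h3⟩
    exact ⟨h1, h2, Or.inl h3⟩

/-- For the lowest unbarred cell `(j, c)` of column `c`, the count up to it is the
full prefix count through column `c`. -/
lemma countUpTo_eq_Ncnt {c j k : ℕ} (hmem : (j, c) ∈ cells d mu)
    (hbar : ¬ L.barred (j, c))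
    (hmin : ∀ b ∈ cells d mu, b.2 = c → ¬ L.barred b → j ≤ b.1) :
    L.countUpTo (j, c) k = L.Ncnt (c + 1) k := by
  unfold SkewBarredTableau.countUpTo Ncnt
  congr 1
  refine congrArg Finset.card (Finset.filter_congr ?_)
  intro b hb
  constructor
  · rintro ⟨h1, h2, (h3 | ⟨h3, h4⟩) | h3⟩
    · exact ⟨h1, h2, by omega⟩
    · exact ⟨h1, h2, by omega⟩
    · subst h3; exact ⟨h1, h2, by omega⟩
  · rintro ⟨h1, h2, h3⟩
    refine ⟨h1, h2, ?_⟩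
    rcases Nat.lt_or_ge b.2 c with h | h
    · exact Or.inl (Or.inl h)
    · have hb2 : b.2 = c := by omega
      have hj := hmin b hb hb2 h1
      rcases Nat.lt_or_ge j b.1 with h' | h'
      · exact Or.inl (Or.inr ⟨hb2, h'⟩)
      · have : b.1 = j := by omega
        right
        have : b = (b.1, b.2) := rfl
        rw [this, hb2, ‹b.1 = j›]

/-- The content of the `λ`-part of the word is a partition (lattice property). -/
lemma top_lattice (hY : L.Yamanouchi) {k : ℕ} (hk : 1 ≤ k) :
    ((cells d lam).filter fun b => L.top b = k + 1).card ≤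
      ((cells d lam).filter fun b => L.top b = k).card := by
  rcases (cells d lam).eq_empty_or_nonempty with he | hne
  · simp [he]
  · obtain ⟨b0, hb0, hb0eq⟩ := Finset.exists_mem_eq_sup' hne (fun b => b.1)
    set h : ℕ := (cells d lam).sup' hne (fun b => b.1) with hh
    have hm : (h, 0) ∈ cells d lam := by
      rcases mem_cells.mp hb0 with ⟨h1, h2⟩
      rw [hb0eq]
      exact mem_cells.mpr ⟨h1, Nat.lt_of_le_of_lt (Nat.zero_le _) h2⟩
    have key : ∀ b ∈ cells d lam, youngBefore (h, 0) b ∨ b = (h, 0) := by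
      intro b hb
      have hle : b.1 ≤ h := Finset.le_sup' (fun b => b.1) hb
      rcases Nat.eq_zero_or_pos b.2 with h2 | h2
      · rcases Nat.lt_or_ge b.1 h with h1 | h1
        · exact Or.inl (Or.inr ⟨h2, h1⟩)
        · right
          have hbeq : b = (b.1, b.2) := rfl
          rw [hbeq, h2]
          have : b.1 = h := by omega
          rw [this]
      · exact Or.inl (Or.inl h2)
    have e : ∀ m : ℕ, L.topCountUpTo (h, 0) m =
        ((cells d lam).filter fun b => L.top b = m).card := by
      intro m
      unfold SkewBarredTableau.topCountUpTo
      congr 1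
      apply Finset.filter_congr
      intro b hb
      constructor
      · rintro ⟨h1, -⟩; exact h1
      · intro h1; exact ⟨h1, key b hb⟩
    have := hY.1 (h, 0) hm k hk
    rw [e k, e (k + 1)] at this
    exact this

/-- The prefix counts form a lattice word (content weakly decreases in `k`). -/
lemma Ncnt_anti (hY : L.Yamanouchi) : ∀ c k, 1 ≤ k → L.Ncnt c (k + 1) ≤ L.Ncnt c k := by
  intro c
  induction c with
  | zero =>
    intro k hk
    rw [Ncnt_zero, Ncnt_zero]
    exact L.top_lattice hY hk
  | succ c ih =>
    intro k hk
    set T := (cells d mu).filter fun b => ¬ L.barred b ∧ b.2 = c with hT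
    rcases T.eq_empty_or_nonempty with he | hne
    · have hz : ∀ m : ℕ,
          ((cells d mu).filter fun b => ¬ L.barred b ∧ L.bot b = m ∧ b.2 = c).card = 0 := by
        intro m
        rw [Finset.card_eq_zero]
        apply Finset.filter_eq_empty_iff.mpr
        intro b hb hcontra
        have : b ∈ T := Finset.mem_filter.mpr ⟨hb, hcontra.1, hcontra.2.2⟩
        rw [he] at this
        exact absurd this (Finset.notMem_empty b)
      rw [Ncnt_succ, Ncnt_succ, hz, hz]
      simpa using ih k hk
    · obtain ⟨b0, hb0, hb0eq⟩ := Finset.exists_mem_eq_inf' hne (fun b => b.1)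
      set j : ℕ := T.inf' hne (fun b => b.1) with hj
      obtain ⟨hb0mem, hb0bar, hb0col⟩ :
          b0 ∈ cells d mu ∧ ¬ L.barred b0 ∧ b0.2 = c := by
        have := Finset.mem_filter.mp hb0
        exact ⟨this.1, this.2.1, this.2.2⟩
      have hb0eq' : b0 = (j, c) := by
        have : b0 = (b0.1, b0.2) := rfl
        rw [this, hb0col, ← hb0eq]
      have hmem : (j, c) ∈ cells d mu := hb0eq' ▸ hb0mem
      have hbar : ¬ L.barred (j, c) := hb0eq' ▸ hb0bar
      have hmin : ∀ b ∈ cells d mu, b.2 = c → ¬ L.barred b → j ≤ b.1 := by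
        intro b hb hbc hbb
        have hbT : b ∈ T := Finset.mem_filter.mpr ⟨hb, hbb, hbc⟩
        exact Finset.inf'_le (fun b => b.1) hbT
      have := hY.2 (j, c) hmem hbar k hk
      rwa [L.countUpTo_eq_Ncnt hmem hbar hmin, L.countUpTo_eq_Ncnt hmem hbar hmin] at this

lemma Ncnt_mono (hY : L.Yamanouchi) {c v w : ℕ} (h1 : 1 ≤ v) (hvw : v ≤ w) :
    L.Ncnt c w ≤ L.Ncnt c v := by
  induction w, hvw using Nat.le_induction with
  | base => exact le_refl _
  | succ m hm ih => exact le_trans (L.Ncnt_anti hY c m (by omega)) ih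

/-- No unbarred cell of column `c` has the value of a barred cell of column `c`. -/
lemma col_val_empty (hmu : IsPartitionVec mu) {r c : ℕ}
    (ha : (r, c) ∈ cells d mu) (hbar : L.barred (r, c)) :
    ((cells d mu).filter fun b =>
      ¬ L.barred b ∧ L.bot b = L.bot (r, c) ∧ b.2 = c) = ∅ := by
  apply Finset.filter_eq_empty_iff.mpr
  rintro b hb ⟨h1, h2, h3⟩
  have hbeq : b = (b.1, c) := by
    have : b = (b.1, b.2) := rfl
    rw [this, h3]
  rcases Nat.lt_trichotomy b.1 r with hlt | heq | hgt
  · have := L.bot_strict hmu ha hlt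
    rw [← hbeq] at this
    omega
  · rw [heq] at hbeq
    rw [hbeq] at h1
    exact h1 hbar
  · have hbc : (b.1, c) ∈ cells d mu := hbeq ▸ hb
    have := L.bot_strict hmu hbc hgt
    rw [← hbeq] at this
    omega

/-- The hard implication (5 ⇒ 4). -/
lemma main54 (hmu : IsPartitionVec mu) (hY : L.Yamanouchi)
    (h5 : ∀ a ∈ cells d mu, L.barred a → a.1 = 0 →
      a.2 + 1 ≤ L.countBefore a (L.bot a)) :
    ∀ a ∈ cells d mu, L.barred a → a.2 + 1 ≤ L.countBefore a (L.bot a) := by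
  have h5' : ∀ c, (0, c) ∈ cells d mu → L.barred (0, c) →
      c + 1 ≤ L.Ncnt c (L.bot (0, c)) := by
    intro c hc hb
    have := h5 (0, c) hc hb rfl
    rwa [L.countBefore_eq_Ncnt hmu hc] at this
  -- Claim C: bottom cells satisfy the weak bound unconditionally.
  have claimC : ∀ c, (0, c) ∈ cells d mu → c ≤ L.Ncnt c (L.bot (0, c)) := by
    intro c
    induction c with
    | zero => intro _; exact Nat.zero_le _
    | succ c ih =>
      intro hc1
      have hc : (0, c) ∈ cells d mu := cells_mono_col hc1 (Nat.le_succ c)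
      have hww : L.bot (0, c + 1) ≤ L.bot (0, c) := L.bot_row 0 c hc1
      have h1w' : 1 ≤ L.bot (0, c + 1) := (L.bot_mem _ hc1).1
      have hmono : L.Ncnt (c + 1) (L.bot (0, c)) ≤ L.Ncnt (c + 1) (L.bot (0, c + 1)) :=
        L.Ncnt_mono hY h1w' hww
      have hsucc := L.Ncnt_succ c (L.bot (0, c))
      by_cases hb : L.barred (0, c)
      · have := h5' c hc hb
        omega
      · have hIH := ih hc
        have hcard : 1 ≤ ((cells d mu).filter fun b =>
            ¬ L.barred b ∧ L.bot b = L.bot (0, c) ∧ b.2 = c).card := by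
          refine Finset.one_le_card.mpr ⟨(0, c), ?_⟩
          exact Finset.mem_filter.mpr ⟨hc, hb, rfl, rfl⟩
        omega
  rintro ⟨r, c⟩ ha hbar
  rw [L.countBefore_eq_Ncnt hmu ha]
  show c + 1 ≤ L.Ncnt c (L.bot (r, c))
  have hc0 : (0, c) ∈ cells d mu := cells_mono_row hmu ha (Nat.zero_le r)
  have h1v : 1 ≤ L.bot (r, c) := (L.bot_mem _ ha).1
  rcases Nat.eq_zero_or_pos r with hr | hr
  · subst hr; exact h5' c hc0 hbar
  · have hvw : L.bot (r, c) < L.bot (0, c) := L.bot_strict hmu ha hr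
    by_cases hb : L.barred (0, c)
    · have h1 := h5' c hc0 hb
      have h2 : L.Ncnt c (L.bot (0, c)) ≤ L.Ncnt c (L.bot (r, c)) :=
        L.Ncnt_mono hY h1v (le_of_lt hvw)
      omega
    · have hC := claimC c hc0
      have hcard : 1 ≤ ((cells d mu).filter fun b =>
          ¬ L.barred b ∧ L.bot b = L.bot (0, c) ∧ b.2 = c).card := by
        refine Finset.one_le_card.mpr ⟨(0, c), ?_⟩
        exact Finset.mem_filter.mpr ⟨hc0, hb, rfl, rfl⟩
      have hsw := L.Ncnt_succ c (L.bot (0, c))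
      have hsv := L.Ncnt_succ c (L.bot (r, c))
      have hempty := L.col_val_empty hmu ha hbar
      rw [hempty] at hsv
      have hmono : L.Ncnt (c + 1) (L.bot (0, c)) ≤ L.Ncnt (c + 1) (L.bot (r, c)) :=
        L.Ncnt_mono hY h1v (le_of_lt hvw)
      simp only [Finset.card_empty] at hsv
      omega

end SkewBarredTableau

/-- Positivity criterion: the following are equivalent for an
equivariant LR skew tableau `L`:
1. `c_L > 0` (every factor `y_i - y_j` of `c_L` has `i > j`);
2. `ω(L^u_{<a})_{|a|} > c(a) - r(a)` for all barred `a`;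
3. the same for all barred `a` with `r(a) = 1`;
4. `ω(L^u_{<a})_{|a|} ≥ c(a)` for all barred `a`;
5. the same for all barred `a` with `r(a) = 1`. -/
theorem positivity_tfae (d : ℕ) (hd : 1 ≤ d)
    (lam mu nu : Fin d → ℕ)
    (hlam : IsPartitionVec lam) (hmu : IsPartitionVec mu) (hnu : IsPartitionVec nu)
    (L : SkewBarredTableau d lam mu) (hL : L.IsLR nu) :
    [ (∀ a ∈ cells d mu, L.barred a → L.fIdx a < L.eIdx a),
      (∀ a ∈ cells d mu, L.barred a →
        (a.2 : ℤ) - (a.1 : ℤ) < (L.countBefore a (L.bot a) : ℤ)),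
      (∀ a ∈ cells d mu, L.barred a → a.1 = 0 →
        (a.2 : ℤ) - (a.1 : ℤ) < (L.countBefore a (L.bot a) : ℤ)),
      (∀ a ∈ cells d mu, L.barred a → a.2 + 1 ≤ L.countBefore a (L.bot a)),
      (∀ a ∈ cells d mu, L.barred a → a.1 = 0 → a.2 + 1 ≤ L.countBefore a (L.bot a))
    ].TFAE := by
  tfae_have 1 → 2 := by
    intro h a ha hb
    have := h a ha hb
    simp only [SkewBarredTableau.eIdx, SkewBarredTableau.fIdx] at this
    omega
  tfae_have 2 → 1 := by
    intro h a ha hb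
    have := h a ha hb
    simp only [SkewBarredTableau.eIdx, SkewBarredTableau.fIdx]
    omega
  tfae_have 2 → 3 := fun h a ha hb _ => h a ha hb
  tfae_have 3 → 5 := by
    intro h a ha hb h0
    have := h a ha hb h0
    omega
  tfae_have 5 → 4 := L.main54 hmu hL.1
  tfae_have 4 → 2 := by
    intro h a ha hb
    have := h a ha hb
    omega
  tfae_finish

end EqLR
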